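/- Let s > 0 with ζ(1/2 + is) = 0, and let L = 2πn/s for a positive integer n, μ = exp(L). Then for every f ∈ S₀^ev, the function χ(u) = u^{is} is well-defined on C = ℝ₊*/μ^ℤ and ∫_C χ(u)·Σ_μE(f)(u) d*u = 0; in particular the subspace Σ_μE(S₀^ev) is not dense in L²(C), i.e. C is a ζ-cycle. -/

import Mathlib

open MeasureTheory Set Complex Filter Topology Asymptotics
open scoped ENNReal NNReal

noncomputable def psum (f : SchwartzMap ℝ ℝ) (x : ℝ) : ℝ := ∑' n : ℕ, f (((n : ℝ) + 1) * x)

lemma schwartz_bound (f : SchwartzMap ℝ ℝ) (k : ℕ) :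
    ∃ C : ℝ, 0 ≤ C ∧ ∀ x : ℝ, |x| ^ k * |f x| ≤ C := by
  obtain ⟨C, hC0, hC⟩ := f.decay k 0
  refine ⟨C, hC0.le, fun x => ?_⟩
  simpa [norm_iteratedFDeriv_zero, Real.norm_eq_abs] using hC x

lemma summable_base : Summable (fun n : ℕ => 1 / ((n : ℝ) + 1) ^ 2) := by
  have := (summable_nat_add_iff (f := fun n : ℕ => 1 / (n : ℝ) ^ 2) 1).2 ?_
  · simpa [Nat.cast_add] using this
  · simpa using Real.summable_one_div_nat_pow.2 one_lt_two

lemma div_sq_eq (C a b : ℝ) : C / (a * b) ^ 2 = C / b ^ 2 * (1 / a ^ 2) := by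
  rw [mul_pow, div_mul_eq_div_div_swap, mul_one_div]

lemma summable_psum (f : SchwartzMap ℝ ℝ) (hf0 : f 0 = 0) (x : ℝ) :
    Summable fun n : ℕ => f (((n : ℝ) + 1) * x) := by
  rcases eq_or_ne x 0 with rfl | hx
  · simpa [hf0] using summable_zero
  obtain ⟨C, hC0, hC⟩ := schwartz_bound f 2
  have hx' : 0 < |x| := abs_pos.2 hx
  apply Summable.of_norm
  have hb : ∀ n : ℕ, ‖f (((n : ℝ) + 1) * x)‖ ≤ C / |x| ^ 2 * (1 / ((n : ℝ) + 1) ^ 2) := by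
    intro n
    have hn1 : (0:ℝ) < (n : ℝ) + 1 := by positivity
    have h := hC (((n : ℝ) + 1) * x)
    have habs : |((n : ℝ) + 1) * x| = ((n : ℝ) + 1) * |x| := by
      rw [abs_mul, abs_of_pos hn1]
    rw [habs] at h
    have hpos : (0:ℝ) < (((n : ℝ) + 1) * |x|) ^ 2 := by positivity
    rw [← le_div_iff₀' hpos] at h
    rw [Real.norm_eq_abs]
    refine h.trans ?_
    rw [div_sq_eq]
  exact Summable.of_nonneg_of_le (fun n => norm_nonneg _) hb (summable_base.mul_left _)

lemma psum_le_atTop (f : SchwartzMap ℝ ℝ) (m : ℕ) :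
    ∃ C : ℝ, 0 ≤ C ∧ ∀ x : ℝ, 1 ≤ x → |psum f x| ≤ C / x ^ m := by
  obtain ⟨C, hC0, hC⟩ := schwartz_bound f (m + 2)
  set K := ∑' n : ℕ, 1 / ((n : ℝ) + 1) ^ 2 with hK
  have hK0 : 0 ≤ K := tsum_nonneg (fun n => by positivity)
  refine ⟨C * K, by positivity, fun x hx => ?_⟩
  have hx0 : (0:ℝ) < x := lt_of_lt_of_le one_pos hx
  have hb : ∀ n : ℕ, ‖f (((n : ℝ) + 1) * x)‖ ≤ (C / x ^ m) * (1 / ((n : ℝ) + 1) ^ 2) := by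
    intro n
    have hn1 : (0:ℝ) < (n : ℝ) + 1 := by positivity
    have hn1' : (1:ℝ) ≤ (n : ℝ) + 1 := by simp
    have h := hC (((n : ℝ) + 1) * x)
    have habs : |((n : ℝ) + 1) * x| = ((n : ℝ) + 1) * x := abs_of_pos (by positivity)
    rw [habs] at h
    have key : ((n : ℝ) + 1) ^ 2 * x ^ m ≤ (((n : ℝ) + 1) * x) ^ (m + 2) := by
      rw [mul_pow]
      have h1 : ((n : ℝ) + 1) ^ 2 ≤ ((n : ℝ) + 1) ^ (m + 2) :=
        pow_le_pow_right₀ hn1' (by omega)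
      have h2 : x ^ m ≤ x ^ (m + 2) := pow_le_pow_right₀ hx (by omega)
      exact mul_le_mul h1 h2 (by positivity) (by positivity)
    have hpos : (0:ℝ) < (((n : ℝ) + 1) * x) ^ (m + 2) := by positivity
    rw [← le_div_iff₀' hpos] at h
    rw [Real.norm_eq_abs]
    refine h.trans ?_
    have := div_le_div_of_nonneg_left hC0 (show (0:ℝ) < ((n:ℝ)+1)^2 * x^m by positivity) key
    refine this.trans_eq ?_
    rw [mul_one_div, div_div, mul_comm]
  have hsum : Summable fun n : ℕ => ‖f (((n : ℝ) + 1) * x)‖ :=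
    Summable.of_nonneg_of_le (fun n => norm_nonneg _) hb (summable_base.mul_left _)
  calc |psum f x| ≤ ∑' n : ℕ, ‖f (((n : ℝ) + 1) * x)‖ := by
        simpa [psum, Real.norm_eq_abs] using
          norm_tsum_le_tsum_norm (f := fun n : ℕ => f (((n : ℝ) + 1) * x)) hsum
    _ ≤ ∑' n : ℕ, (C / x ^ m) * (1 / ((n : ℝ) + 1) ^ 2) :=
        Summable.tsum_le_tsum hb hsum (summable_base.mul_left _)
    _ = (C / x ^ m) * K := by rw [tsum_mul_left]
    _ = C * K / x ^ m := by ring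

lemma psum_def (f : SchwartzMap ℝ ℝ) (x : ℝ) : psum f x = ∑' n : ℕ, f (((n : ℝ) + 1) * x) := rfl

lemma integral_Ioi_eq_zero (f : SchwartzMap ℝ ℝ) (hev : ∀ x, f (-x) = f x)
    (hint : (∫ x : ℝ, f x) = 0) : ∫ x in Ioi (0:ℝ), f x = 0 := by
  have hfi : Integrable (fun x => f x) := f.integrable
  have h1 : ∫ x in Iic (0:ℝ), f x = ∫ x in Ioi (0:ℝ), f x := by
    have h2 := integral_comp_neg_Ioi (0:ℝ) (fun x => f x)
    rw [neg_zero] at h2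
    rw [← h2]
    exact (setIntegral_congr_fun measurableSet_Ioi (fun x _ => hev x))
  have h3 := integral_add_compl (measurableSet_Iic (a := (0:ℝ))) hfi
  rw [compl_Iic, hint, h1] at h3
  linarith

lemma deriv_integrable (f : SchwartzMap ℝ ℝ) : Integrable (fun t => deriv f t) := by
  have h := (SchwartzMap.derivCLM ℝ ℝ f).integrable (μ := volume)
  exact h.congr (ae_of_all _ fun t => SchwartzMap.derivCLM_apply (𝕜 := ℝ) (F := ℝ) f t)

lemma deriv_continuous (f : SchwartzMap ℝ ℝ) : Continuous (fun t => deriv f t) := by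
  have : (fun t => deriv f t) = fun t => (SchwartzMap.derivCLM ℝ ℝ f) t := by
    funext t; exact (SchwartzMap.derivCLM_apply (𝕜 := ℝ) (F := ℝ) f t).symm
  rw [this]; exact (SchwartzMap.derivCLM ℝ ℝ f).continuous

lemma psum_bounded_pos (f : SchwartzMap ℝ ℝ) (hev : ∀ x, f (-x) = f x) (hf0 : f 0 = 0)
    (hint : (∫ x : ℝ, f x) = 0) :
    ∃ B : ℝ, 0 ≤ B ∧ ∀ x : ℝ, 0 < x → |psum f x| ≤ B := by
  classical
  have hderiv := deriv_integrable f
  have hdc := deriv_continuous f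
  have hfc : Continuous (fun t : ℝ => f t) := f.continuous
  set B := ∫ t in Ioi (0:ℝ), |deriv f t| with hB
  have hB0 : 0 ≤ B := setIntegral_nonneg measurableSet_Ioi (fun t _ => abs_nonneg _)
  refine ⟨B, hB0, fun x hx => ?_⟩
  have key : ∀ N : ℕ, |x * (∑ n ∈ Finset.range N, f (((n:ℝ)+1)*x))
      - ∫ t in (0:ℝ)..((N:ℝ)*x), f t| ≤ x * B := by
    intro N
    have hcast : ∀ n : ℕ, ((n+1 : ℕ) : ℝ) = (n:ℝ) + 1 := fun n => by push_cast; ring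
    have hadj : ∑ n ∈ Finset.range N, ∫ t in ((n:ℝ)*x)..(((n:ℝ)+1)*x), f t
        = ∫ t in (0:ℝ)..((N:ℝ)*x), f t := by
      have h := intervalIntegral.sum_integral_adjacent_intervals
        (a := fun n : ℕ => (n:ℝ)*x) (n := N) (f := fun t => f t) (μ := volume)
        (fun i _ => hfc.intervalIntegrable _ _)
      simp only [Nat.cast_zero, zero_mul] at h
      rw [← h]
      refine Finset.sum_congr rfl (fun n _ => ?_)
      rw [hcast n]
    have hadj' : ∑ n ∈ Finset.range N, ∫ t in ((n:ℝ)*x)..(((n:ℝ)+1)*x), |deriv f t|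
        = ∫ t in (0:ℝ)..((N:ℝ)*x), |deriv f t| := by
      have h := intervalIntegral.sum_integral_adjacent_intervals
        (a := fun n : ℕ => (n:ℝ)*x) (n := N) (f := fun t => |deriv f t|) (μ := volume)
        (fun i _ => (hdc.abs.intervalIntegrable _ _))
      simp only [Nat.cast_zero, zero_mul] at h
      rw [← h]
      refine Finset.sum_congr rfl (fun n _ => ?_)
      rw [hcast n]
    have hterm : ∀ n : ℕ, |x * f (((n:ℝ)+1)*x) - ∫ t in ((n:ℝ)*x)..(((n:ℝ)+1)*x), f t|
        ≤ x * ∫ t in ((n:ℝ)*x)..(((n:ℝ)+1)*x), |deriv f t| := by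
      intro n
      set a := (n:ℝ)*x with ha
      set b := ((n:ℝ)+1)*x with hb'
      have hab : a ≤ b := by
        rw [ha, hb']; nlinarith [hx.le, Nat.cast_nonneg (α := ℝ) n]
      have hba : b - a = x := by rw [ha, hb']; ring
      set D := ∫ t in a..b, |deriv f t| with hD
      have hD0 : 0 ≤ D :=
        intervalIntegral.integral_nonneg hab (fun t _ => abs_nonneg _)
      have hDb : ∀ t ∈ Icc a b, |f b - f t| ≤ D := by
        intro t ht
        have h1 : ∫ y in t..b, deriv f y = f b - f t :=
          intervalIntegral.integral_deriv_eq_sub (fun y _ => f.differentiableAt)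
            (hdc.intervalIntegrable _ _)
        rw [← h1]
        calc |∫ y in t..b, deriv f y| ≤ ∫ y in t..b, |deriv f y| :=
              intervalIntegral.abs_integral_le_integral_abs ht.2
          _ ≤ D := by
              rw [hD]
              refine intervalIntegral.integral_mono_interval ht.1 ht.2 le_rfl
                (ae_of_all _ (fun y => abs_nonneg _)) (hdc.abs.intervalIntegrable _ _)
      have heq : x * f b - ∫ t in a..b, f t = ∫ t in a..b, (f b - f t) := by
        rw [intervalIntegral.integral_sub (intervalIntegrable_const)
          (hfc.intervalIntegrable _ _), intervalIntegral.integral_const, hba, smul_eq_mul]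
      rw [heq]
      calc |∫ t in a..b, (f b - f t)| ≤ ∫ t in a..b, |f b - f t| :=
            intervalIntegral.abs_integral_le_integral_abs hab
        _ ≤ ∫ t in a..b, D := by
            refine intervalIntegral.integral_mono_on hab ?_ intervalIntegrable_const hDb
            exact ((continuous_const.sub hfc).abs).intervalIntegrable _ _
        _ = x * D := by rw [intervalIntegral.integral_const, hba, smul_eq_mul]
    have hNx : (0:ℝ) ≤ (N:ℝ)*x := by positivity
    calc |x * (∑ n ∈ Finset.range N, f (((n:ℝ)+1)*x)) - ∫ t in (0:ℝ)..((N:ℝ)*x), f t|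
        = |∑ n ∈ Finset.range N, (x * f (((n:ℝ)+1)*x)
            - ∫ t in ((n:ℝ)*x)..(((n:ℝ)+1)*x), f t)| := by
          rw [Finset.sum_sub_distrib, ← Finset.mul_sum, hadj]
      _ ≤ ∑ n ∈ Finset.range N, |x * f (((n:ℝ)+1)*x)
            - ∫ t in ((n:ℝ)*x)..(((n:ℝ)+1)*x), f t| := Finset.abs_sum_le_sum_abs _ _
      _ ≤ ∑ n ∈ Finset.range N, x * ∫ t in ((n:ℝ)*x)..(((n:ℝ)+1)*x), |deriv f t| :=
          Finset.sum_le_sum (fun n _ => hterm n)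
      _ = x * ∫ t in (0:ℝ)..((N:ℝ)*x), |deriv f t| := by rw [← Finset.mul_sum, hadj']
      _ ≤ x * B := by
          refine mul_le_mul_of_nonneg_left ?_ hx.le
          rw [intervalIntegral.integral_of_le hNx, hB]
          refine setIntegral_mono_set (hderiv.integrableOn.abs) ?_ ?_
          · exact ae_of_all _ (fun t => abs_nonneg _)
          · exact HasSubset.Subset.eventuallyLE Ioc_subset_Ioi_self
  have hsum := summable_psum f hf0 x
  have hS : Tendsto (fun N => ∑ n ∈ Finset.range N, f (((n:ℝ)+1)*x)) atTop
      (𝓝 (psum f x)) := by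
    rw [psum_def]
    exact hsum.hasSum.tendsto_sum_nat
  have hIoi : IntegrableOn (fun t : ℝ => f t) (Ioi (0:ℝ)) := f.integrable.integrableOn
  have hInt : Tendsto (fun N : ℕ => ∫ t in (0:ℝ)..((N:ℝ)*x), f t) atTop (𝓝 0) := by
    have h := intervalIntegral_tendsto_integral_Ioi (a := 0) hIoi
      (b := fun N : ℕ => (N:ℝ)*x) (tendsto_natCast_atTop_atTop.atTop_mul_const hx)
    rwa [integral_Ioi_eq_zero f hev hint] at h
  have hT : Tendsto (fun N => |x * (∑ n ∈ Finset.range N, f (((n:ℝ)+1)*x))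
      - ∫ t in (0:ℝ)..((N:ℝ)*x), f t|) atTop (𝓝 |x * psum f x - 0|) :=
    ((hS.const_mul x).sub hInt).abs
  have hle : |x * psum f x - 0| ≤ x * B := le_of_tendsto hT (Eventually.of_forall key)
  rw [sub_zero, abs_mul, abs_of_pos hx] at hle
  exact le_of_mul_le_mul_left hle hx

lemma psum_measurable (f : SchwartzMap ℝ ℝ) (hf0 : f 0 = 0) : Measurable (psum f) := by
  have h : ∀ x, Tendsto (fun N => ∑ n ∈ Finset.range N, f (((n:ℝ)+1)*x)) atTop
      (𝓝 (psum f x)) := fun x => (summable_psum f hf0 x).hasSum.tendsto_sum_nat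
  refine measurable_of_tendsto_metrizable (fun N => ?_) (tendsto_pi_nhds.2 h)
  refine Finset.measurable_sum _ (fun n _ => ?_)
  exact (f.continuous.comp (by continuity)).measurable

lemma isBigO_neg_rpow_atTop {g : ℝ → ℝ}
    (hg : ∀ m : ℕ, ∃ C : ℝ, 0 ≤ C ∧ ∀ x : ℝ, 1 ≤ x → |g x| ≤ C / x ^ m) (a : ℝ) :
    (fun x : ℝ => ((g x : ℝ) : ℂ)) =O[atTop] fun x => x ^ (-a) := by
  obtain ⟨m, hm⟩ := exists_nat_ge a
  obtain ⟨C, hC0, hC⟩ := hg m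
  rw [isBigO_iff]
  refine ⟨C, eventually_atTop.2 ⟨1, fun x hx => ?_⟩⟩
  have hx0 : (0:ℝ) < x := lt_of_lt_of_le one_pos hx
  have h1 : ‖((g x : ℝ) : ℂ)‖ = |g x| := by
    rw [Complex.norm_real, Real.norm_eq_abs]
  have h2 : ‖x ^ (-a)‖ = x ^ (-a) := by
    rw [Real.norm_eq_abs, abs_of_pos (Real.rpow_pos_of_pos hx0 _)]
  rw [h1, h2]
  refine (hC x hx).trans ?_
  have h3 : C / x ^ m = C * x ^ (-(m:ℝ)) := by
    rw [Real.rpow_neg hx0.le, Real.rpow_natCast]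
    ring
  rw [h3]
  exact mul_le_mul_of_nonneg_left
    (Real.rpow_le_rpow_of_exponent_le hx (neg_le_neg hm)) hC0

lemma isBigO_one_nhdsWithin_zero {g : ℝ → ℝ} (B : ℝ)
    (h : ∀ x : ℝ, 0 < x → |g x| ≤ B) :
    (fun x : ℝ => ((g x : ℝ) : ℂ)) =O[𝓝[>] (0:ℝ)] fun x => x ^ (-(0:ℝ)) := by
  rw [isBigO_iff]
  refine ⟨B, eventually_nhdsWithin_of_forall (fun x hx => ?_)⟩
  have hx : (0:ℝ) < x := hx
  rw [neg_zero, Real.rpow_zero, norm_one, mul_one, Complex.norm_real, Real.norm_eq_abs]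
  exact h x hx

lemma locallyIntegrableOn_ofReal {g : ℝ → ℝ} (hg : Measurable g) (B : ℝ)
    (h : ∀ x : ℝ, 0 < x → |g x| ≤ B) :
    LocallyIntegrableOn (fun x : ℝ => ((g x : ℝ) : ℂ)) (Ioi 0) volume := by
  intro x hx
  have hx0 : (0:ℝ) < x := hx
  refine ⟨Ioo (x/2) (x+1),
    mem_nhdsWithin_of_mem_nhds (Ioo_mem_nhds (by linarith) (by linarith)), ?_⟩
  refine Integrable.mono' (g := fun _ => B) (integrableOn_const measure_Ioo_lt_top.ne)
    ((Complex.measurable_ofReal.comp hg).aestronglyMeasurable) ?_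
  refine (ae_restrict_iff' measurableSet_Ioo).2 (ae_of_all _ (fun y hy => ?_))
  rw [Complex.norm_real, Real.norm_eq_abs]
  exact h y (by linarith [hy.1])

lemma schwartz_le_atTop (f : SchwartzMap ℝ ℝ) (m : ℕ) :
    ∃ C : ℝ, 0 ≤ C ∧ ∀ x : ℝ, 1 ≤ x → |f x| ≤ C / x ^ m := by
  obtain ⟨C, hC0, hC⟩ := schwartz_bound f m
  refine ⟨C, hC0, fun x hx => ?_⟩
  have hx0 : (0:ℝ) < x := lt_of_lt_of_le one_pos hx
  have h := hC x
  rw [abs_of_pos hx0] at h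
  rw [le_div_iff₀ (by positivity)]
  calc |f x| * x ^ m = x ^ m * |f x| := by ring
    _ ≤ C := h

lemma schwartz_bounded (f : SchwartzMap ℝ ℝ) : ∃ C : ℝ, 0 ≤ C ∧ ∀ x : ℝ, |f x| ≤ C := by
  obtain ⟨C, hC0, hC⟩ := schwartz_bound f 0
  exact ⟨C, hC0, fun x => by simpa using hC x⟩

noncomputable def mellinF (f : SchwartzMap ℝ ℝ) : ℂ → ℂ :=
  mellin (fun t : ℝ => ((f t : ℝ) : ℂ))

noncomputable def mellinG (f : SchwartzMap ℝ ℝ) : ℂ → ℂ :=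
  mellin (fun t : ℝ => ((psum f t : ℝ) : ℂ))

lemma mellinF_differentiableAt (f : SchwartzMap ℝ ℝ) {w : ℂ} (hw : 0 < w.re) :
    DifferentiableAt ℂ (mellinF f) w := by
  obtain ⟨C, hC0, hC⟩ := schwartz_bounded f
  refine mellin_differentiableAt_of_isBigO_rpow
    (locallyIntegrableOn_ofReal (f.continuous.measurable) C (fun x _ => hC x))
    (isBigO_neg_rpow_atTop (schwartz_le_atTop f) (w.re + 1)) (by linarith)
    (isBigO_one_nhdsWithin_zero C (fun x _ => hC x)) hw

lemma mellinF_convergent (f : SchwartzMap ℝ ℝ) {w : ℂ} (hw : 0 < w.re) :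
    MellinConvergent (fun t : ℝ => ((f t : ℝ) : ℂ)) w := by
  obtain ⟨C, hC0, hC⟩ := schwartz_bounded f
  refine mellinConvergent_of_isBigO_rpow
    (locallyIntegrableOn_ofReal (f.continuous.measurable) C (fun x _ => hC x))
    (isBigO_neg_rpow_atTop (schwartz_le_atTop f) (w.re + 1)) (by linarith)
    (isBigO_one_nhdsWithin_zero C (fun x _ => hC x)) hw

section S0

variable {f : SchwartzMap ℝ ℝ} (hev : ∀ x, f (-x) = f x) (hf0 : f 0 = 0)
  (hint : (∫ x : ℝ, f x) = 0)

include hev hf0 hint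

lemma psum_le_all (m : ℕ) :
    ∃ C : ℝ, 0 ≤ C ∧ ∀ x : ℝ, 1 ≤ x → |psum f x| ≤ C / x ^ m := psum_le_atTop f m

lemma mellinG_differentiableAt {w : ℂ} (hw : 0 < w.re) :
    DifferentiableAt ℂ (mellinG f) w := by
  obtain ⟨B, hB0, hB⟩ := psum_bounded_pos f hev hf0 hint
  refine mellin_differentiableAt_of_isBigO_rpow
    (locallyIntegrableOn_ofReal (psum_measurable f hf0) B hB)
    (isBigO_neg_rpow_atTop (psum_le_atTop f) (w.re + 1)) (by linarith)
    (isBigO_one_nhdsWithin_zero B hB) hw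

lemma mellinG_convergent {w : ℂ} (hw : 0 < w.re) :
    MellinConvergent (fun t : ℝ => ((psum f t : ℝ) : ℂ)) w := by
  obtain ⟨B, hB0, hB⟩ := psum_bounded_pos f hev hf0 hint
  refine mellinConvergent_of_isBigO_rpow
    (locallyIntegrableOn_ofReal (psum_measurable f hf0) B hB)
    (isBigO_neg_rpow_atTop (psum_le_atTop f) (w.re + 1)) (by linarith)
    (isBigO_one_nhdsWithin_zero B hB) hw

end S0
lemma summable_rpow_shift {σ : ℝ} (hσ : 1 < σ) :
    Summable (fun n : ℕ => ((n : ℝ) + 1) ^ (-σ)) := by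
  have h := (summable_nat_add_iff (f := fun n : ℕ => (n : ℝ) ^ (-σ)) 1).2
    (Real.summable_nat_rpow.2 (by linarith))
  refine h.congr (fun n => ?_)
  push_cast
  ring_nf

lemma mellinG_eq_of_one_lt (f : SchwartzMap ℝ ℝ) (hf0 : f 0 = 0) {w : ℂ} (hw : 1 < w.re) :
    mellinG f w = riemannZeta w * mellinF f w := by
  have hw0 : 0 < w.re := by linarith
  set σ := w.re with hσ
  set F : ℕ → ℝ → ℂ := fun n t => (t : ℂ) ^ (w - 1) • ((f (((n:ℝ)+1)*t) : ℝ) : ℂ) with hF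
  -- each F n is integrable on Ioi 0
  have hF_int : ∀ n : ℕ, IntegrableOn (F n) (Ioi 0) volume := by
    intro n
    have h := (MellinConvergent.comp_mul_left (f := fun t : ℝ => ((f t : ℝ) : ℂ)) (s := w)
      (a := (n:ℝ)+1) (by positivity)).2 (mellinF_convergent f hw0)
    exact h
  -- value of the norm integrals
  set H : ℝ → ℝ := fun u => u ^ (σ - 1) * |f u| with hH
  set MH : ℝ := ∫ u in Ioi (0:ℝ), H u with hMH
  have hMH0 : 0 ≤ MH := setIntegral_nonneg measurableSet_Ioi
    (fun u hu => mul_nonneg (Real.rpow_nonneg (le_of_lt hu) _) (abs_nonneg _))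
  have hnorm : ∀ n : ℕ, ∫ t in Ioi (0:ℝ), ‖F n t‖ = ((n:ℝ)+1) ^ (1-σ) * (((n:ℝ)+1)⁻¹ * MH) := by
    intro n
    have hn : (0:ℝ) < (n:ℝ)+1 := by positivity
    have heq : ∀ t ∈ Ioi (0:ℝ), ‖F n t‖ = ((n:ℝ)+1) ^ (1-σ) * H (((n:ℝ)+1)*t) := by
      intro t ht
      have ht0 : (0:ℝ) < t := ht
      rw [hF]
      simp only [norm_smul, Complex.norm_real, Real.norm_eq_abs,
        Complex.norm_cpow_eq_rpow_re_of_pos ht0, Complex.sub_re, Complex.one_re]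
      rw [hH]
      simp only
      rw [Real.mul_rpow hn.le ht0.le, ← hσ]
      rw [show ((n:ℝ)+1) ^ (1-σ) * (((n:ℝ)+1) ^ (σ-1) * t ^ (σ-1) * |f (((n:ℝ)+1)*t)|)
          = (((n:ℝ)+1) ^ (1-σ) * ((n:ℝ)+1) ^ (σ-1)) * (t ^ (σ-1) * |f (((n:ℝ)+1)*t)|) by ring]
      rw [← Real.rpow_add hn, show (1-σ) + (σ-1) = 0 by ring, Real.rpow_zero, one_mul]
    rw [setIntegral_congr_fun measurableSet_Ioi heq, integral_const_mul]
    congr 1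
    have h := integral_comp_mul_left_Ioi H 0 (show (0:ℝ) < (n:ℝ)+1 from hn)
    rw [mul_zero] at h
    rw [h, smul_eq_mul, hMH]
  -- summability of norm integrals
  have hF_sum : Summable fun n : ℕ => ∫ t in Ioi (0:ℝ), ‖F n t‖ := by
    refine Summable.congr ?_ (fun n => (hnorm n).symm)
    have hs : Summable (fun n : ℕ => ((n:ℝ)+1) ^ (-σ) * MH) := (summable_rpow_shift hw).mul_right _
    refine hs.congr (fun n => ?_)
    have hn : (0:ℝ) < (n:ℝ)+1 := by positivity
    rw [show (((n:ℝ)+1)⁻¹ * MH) = ((n:ℝ)+1) ^ (-(1:ℝ)) * MH by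
      rw [Real.rpow_neg_one]]
    rw [← mul_assoc, ← Real.rpow_add hn, show (1-σ) + -(1:ℝ) = -σ by ring]
  -- interchange
  have hinter := integral_tsum_of_summable_integral_norm
    (μ := volume.restrict (Ioi (0:ℝ))) (F := F) (fun n => hF_int n) hF_sum
  -- identify LHS of hinter with Dirichlet series, RHS with mellinG
  have hrhs : (∫ t in Ioi (0:ℝ), ∑' n, F n t) = mellinG f w := by
    rw [mellinG, mellin]
    refine setIntegral_congr_fun measurableSet_Ioi (fun t ht => ?_)
    rw [psum_def, Complex.ofReal_tsum, hF]
    simp only [smul_eq_mul]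
    rw [tsum_mul_left]
  have hlhs : ∀ n : ℕ, (∫ t in Ioi (0:ℝ), F n t) = ((n:ℂ)+1) ^ (-w) * mellinF f w := by
    intro n
    have hn : (0:ℝ) < (n:ℝ)+1 := by positivity
    have h := mellin_comp_mul_left (fun t : ℝ => ((f t : ℝ) : ℂ)) w hn
    have h2 : mellin (fun t : ℝ => ((f (((n:ℝ)+1) * t) : ℝ) : ℂ)) w
        = ∫ t in Ioi (0:ℝ), F n t := rfl
    rw [h2] at h
    rw [h, smul_eq_mul, mellinF]
    norm_num
  rw [hrhs] at hinter
  rw [← hinter]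
  have hzeta := zeta_eq_tsum_one_div_nat_add_one_cpow (by rwa [← hσ] : 1 < w.re)
  rw [hzeta, ← tsum_mul_right]
  refine tsum_congr (fun n => ?_)
  rw [hlhs n, one_div, ← cpow_neg]
def Uset : Set ℂ := {w : ℂ | 1/4 < w.re} \ {1}

lemma Uset_open : IsOpen Uset :=
  (isOpen_lt continuous_const Complex.continuous_re).sdiff isClosed_singleton

lemma mem_Uset {w : ℂ} (h1 : 1/4 < w.re) (h2 : w ≠ 1) : w ∈ Uset := ⟨h1, by simpa using h2⟩

lemma Uset_preconnected : IsPreconnected Uset := by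
  classical
  set A : Set ℂ := {w : ℂ | 1 < w.re} with hA
  set B : Set ℂ := {w : ℂ | 1/4 < w.re} ∩ {w : ℂ | 0 < w.im} with hB
  set C : Set ℂ := {w : ℂ | 1/4 < w.re} ∩ {w : ℂ | w.im < 0} with hC
  set D : Set ℂ := {w : ℂ | 1/4 < w.re} ∩ {w : ℂ | w.re < 1} with hD
  have hpA : IsPreconnected A := (convex_halfSpace_re_gt 1).isPreconnected
  have hpB : IsPreconnected B :=
    ((convex_halfSpace_re_gt _).inter (convex_halfSpace_im_gt _)).isPreconnected
  have hpC : IsPreconnected C :=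
    ((convex_halfSpace_re_gt _).inter (convex_halfSpace_im_lt _)).isPreconnected
  have hpD : IsPreconnected D :=
    ((convex_halfSpace_re_gt _).inter (convex_halfSpace_re_lt _)).isPreconnected
  have s1 : IsPreconnected (A ∪ B) := by
    refine IsPreconnected.union (2 + Complex.I) ?_ ?_ hpA hpB
    · simp [hA, Complex.add_re]
    · constructor <;> simp [Complex.add_re, Complex.add_im] <;> norm_num
  have s2 : IsPreconnected ((A ∪ B) ∪ D) := by
    refine IsPreconnected.union ((1:ℂ)/2 + Complex.I) ?_ ?_ s1 hpD
    · refine Or.inr ⟨?_, ?_⟩ <;> simp [Complex.add_re, Complex.add_im, Complex.div_re] <;> try norm_num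
    · constructor <;> simp [Complex.add_re, Complex.add_im, Complex.div_re] <;> try norm_num
  have s3 : IsPreconnected (((A ∪ B) ∪ D) ∪ C) := by
    refine IsPreconnected.union (2 - Complex.I) ?_ ?_ s2 hpC
    · refine Or.inl (Or.inl ?_)
      simp [hA, Complex.sub_re]
    · constructor <;> simp [Complex.sub_re, Complex.sub_im] <;> norm_num
  have hU : Uset = ((A ∪ B) ∪ D) ∪ C := by
    ext w
    simp only [Uset, mem_diff, mem_setOf_eq, mem_singleton_iff, mem_union, mem_inter_iff,
      hA, hB, hC, hD]
    constructor
    · rintro ⟨h1, h2⟩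
      rcases lt_trichotomy w.re 1 with hr | hr | hr
      · exact Or.inl (Or.inr ⟨h1, hr⟩)
      · rcases lt_trichotomy w.im 0 with hi | hi | hi
        · exact Or.inr ⟨h1, hi⟩
        · exact absurd (Complex.ext (by simpa using hr) (by simpa using hi)) h2
        · exact Or.inl (Or.inl (Or.inr ⟨h1, hi⟩))
      · exact Or.inl (Or.inl (Or.inl hr))
    · rintro (((hr | ⟨h1, hi⟩) | ⟨h1, hr⟩) | ⟨h1, hi⟩)
      · refine ⟨by linarith, fun hw => ?_⟩
        rw [hw] at hr; simp at hr
      · refine ⟨h1, fun hw => ?_⟩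
        rw [hw] at hi; simp at hi
      · refine ⟨h1, fun hw => ?_⟩
        rw [hw] at hr; simp at hr
      · refine ⟨h1, fun hw => ?_⟩
        rw [hw] at hi; simp at hi
  rw [hU]
  exact s3

lemma mellinG_eq_mul (f : SchwartzMap ℝ ℝ) (hev : ∀ x, f (-x) = f x) (hf0 : f 0 = 0)
    (hint : (∫ x : ℝ, f x) = 0) {w₀ : ℂ} (hre : w₀.re = 1/2) (hne : w₀ ≠ 1) :
    mellinG f w₀ = riemannZeta w₀ * mellinF f w₀ := by
  have hG : AnalyticOnNhd ℂ (mellinG f) Uset := by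
    refine DifferentiableOn.analyticOnNhd (fun w hw => ?_) Uset_open
    exact (mellinG_differentiableAt hev hf0 hint (by
      have := hw.1; simp only [mem_setOf_eq] at this; linarith)).differentiableWithinAt
  have hZ : AnalyticOnNhd ℂ (fun w => riemannZeta w * mellinF f w) Uset := by
    refine DifferentiableOn.analyticOnNhd (fun w hw => ?_) Uset_open
    have hne1 : w ≠ 1 := by simpa using hw.2
    have h1 : 0 < w.re := by have := hw.1; simp only [mem_setOf_eq] at this; linarith
    exact ((differentiableAt_riemannZeta hne1).mul
      (mellinF_differentiableAt f h1)).differentiableWithinAt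
  have h2 : (2:ℂ) ∈ Uset := mem_Uset (by norm_num) (by norm_num)
  have hev' : mellinG f =ᶠ[𝓝 (2:ℂ)] fun w => riemannZeta w * mellinF f w := by
    have hmem : {w : ℂ | 1 < w.re} ∈ 𝓝 (2:ℂ) :=
      (isOpen_lt continuous_const Complex.continuous_re).mem_nhds (by norm_num)
    filter_upwards [hmem] with w hw using mellinG_eq_of_one_lt f hf0 hw
  exact hG.eqOn_of_preconnected_of_eventuallyEq hZ Uset_preconnected h2 hev'
    (mem_Uset (by rw [hre]; norm_num) hne)
section unfold

variable {s L μ : ℝ} (hs : 0 < s) (n : ℕ) (hn : 0 < n)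
  (hL : L = 2 * Real.pi * n / s) (hμ : μ = Real.exp L)

include hs hn hL hμ

lemma hL_pos : 0 < L := by
  rw [hL]
  have : (0:ℝ) < (n:ℝ) := by exact_mod_cast hn
  positivity

lemma hμ_one : 1 < μ := by
  rw [hμ]
  exact Real.one_lt_exp_iff.2 (hL_pos hs n hn hL hμ)

lemma zpow_exp (k : ℤ) : μ ^ k = Real.exp (L * k) := by
  have hμ0 : 0 < μ := lt_trans one_pos (hμ_one hs n hn hL hμ)
  rw [← Real.rpow_intCast μ k, Real.rpow_def_of_pos hμ0, hμ, Real.log_exp]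

lemma cpow_exp_I (t : ℝ) : ((Real.exp t : ℝ) : ℂ) ^ (Complex.I * (s:ℂ))
    = Complex.exp (Complex.I * s * t) := by
  rw [Complex.cpow_def_of_ne_zero (Complex.ofReal_ne_zero.2 (Real.exp_pos t).ne')]
  rw [← Complex.ofReal_log (Real.exp_pos t).le, Real.log_exp, mul_comm]

lemma hμk_one (k : ℤ) : ((μ ^ k : ℝ) : ℂ) ^ (Complex.I * (s:ℂ)) = 1 := by
  rw [zpow_exp hs n hn hL hμ k, cpow_exp_I hs n hn hL hμ]
  have hsL : s * L = 2 * Real.pi * n := by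
    rw [hL]; field_simp
  have hsLC : ((s * L : ℝ) : ℂ) = ((2 * Real.pi * n : ℝ) : ℂ) := by rw [hsL]
  push_cast at hsLC
  have harg : Complex.I * (s:ℂ) * ((L * k : ℝ) : ℂ) = ((k * n : ℤ) : ℂ) * (2 * Real.pi * Complex.I) := by
    push_cast
    calc Complex.I * (s:ℂ) * ((L:ℂ) * (k:ℂ)) = (k:ℂ) * ((s:ℂ) * (L:ℂ)) * Complex.I := by ring
      _ = (k:ℂ) * (2 * (Real.pi:ℂ) * (n:ℂ)) * Complex.I := by rw [hsLC]
      _ = (k:ℂ) * (n:ℂ) * (2 * (Real.pi:ℂ) * Complex.I) := by ring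
  rw [harg, Complex.exp_int_mul_two_pi_mul_I]

end unfold
/-- `Σ_μ E(f)(u) = ∑_{k∈ℤ} (μ^k u)^{1/2} ∑_{n≥1} f(n μ^k u)`. -/
noncomputable def SigmaE (μ : ℝ) (f : SchwartzMap ℝ ℝ) (u : ℝ) : ℝ :=
  ∑' k : ℤ, Real.sqrt (μ ^ k * u) * ∑' n : ℕ, f (((n : ℝ) + 1) * (μ ^ k * u))

lemma rpow_neg_half_eq (v : ℝ) (hv0 : 0 < v) : v ^ (-(1/2) : ℝ) = Real.sqrt v / v := by
  have hsv : 0 < Real.sqrt v := Real.sqrt_pos.2 hv0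
  rw [Real.rpow_neg hv0.le, ← Real.sqrt_eq_rpow]
  rw [show Real.sqrt v / v = Real.sqrt v / (Real.sqrt v * Real.sqrt v) by
    rw [Real.mul_self_sqrt hv0.le]]
  field_simp

section unfold2

variable {s L μ : ℝ} (hs : 0 < s) (n : ℕ) (hn : 0 < n)
  (hL : L = 2 * Real.pi * n / s) (hμ : μ = Real.exp L)

include hs hn hL hμ

lemma unfold_integral (f : SchwartzMap ℝ ℝ) (hev : ∀ x, f (-x) = f x) (hf0 : f 0 = 0)
    (hint : (∫ x : ℝ, f x) = 0) :
    (∫ u in Set.Ioc (1:ℝ) μ, (u:ℂ) ^ (Complex.I * (s:ℂ)) * (SigmaE μ f u : ℂ) / u)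
      = mellinG f (1/2 + Complex.I * (s:ℂ)) := by
  classical
  have hμ1 : 1 < μ := hμ_one hs n hn hL hμ
  have hμ0 : 0 < μ := lt_trans one_pos hμ1
  set w₀ : ℂ := 1/2 + Complex.I * (s:ℂ) with hw₀
  have hw₀re : w₀.re = 1/2 := by
    rw [hw₀]
    simp [Complex.add_re, Complex.mul_re]
  have hw₀re' : (w₀ - 1).re = -(1/2) := by
    rw [Complex.sub_re, hw₀re, Complex.one_re]; norm_num
  set ψ : ℝ → ℂ := fun v => (v:ℂ) ^ (w₀ - 1) • ((psum f v : ℝ) : ℂ) with hψ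
  have hψint : IntegrableOn ψ (Ioi 0) volume := by
    have h := mellinG_convergent hev hf0 hint (w := w₀) (by rw [hw₀re]; norm_num)
    exact h
  obtain ⟨B, hB0, hB⟩ := psum_bounded_pos f hev hf0 hint
  obtain ⟨C, hC0, hC⟩ := psum_le_atTop f 1
  set q : ℝ := Real.sqrt μ with hq
  have hq1 : 1 < q := by
    rw [hq, show (1:ℝ) = Real.sqrt 1 by simp]
    exact Real.sqrt_lt_sqrt zero_le_one hμ1
  have hq0 : 0 < q := lt_trans one_pos hq1
  have hμqq : ∀ k : ℤ, μ ^ k = q ^ k * q ^ k := by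
    intro k
    have hqq : q * q = μ := Real.mul_self_sqrt hμ0.le
    rw [← hqq, mul_zpow]
  set h : ℤ → ℝ → ℂ := fun k u => (μ ^ k : ℝ) • ψ (μ ^ k * u) with hh
  -- Step A : pointwise identity on Ioc 1 μ
  have hA : ∀ u ∈ Set.Ioc (1:ℝ) μ,
      (u:ℂ) ^ (Complex.I * (s:ℂ)) * (SigmaE μ f u : ℂ) / u = ∑' k : ℤ, h k u := by
    intro u hu
    have hu0 : 0 < u := lt_trans one_pos hu.1
    rw [SigmaE, Complex.ofReal_tsum, div_eq_mul_inv, ← tsum_mul_left, ← tsum_mul_right]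
    refine tsum_congr (fun k => ?_)
    have hμk0 : (0:ℝ) < μ ^ k := zpow_pos hμ0 k
    have hv0 : 0 < μ ^ k * u := mul_pos hμk0 hu0
    have hsplit : ((μ ^ k * u : ℝ) : ℂ) ^ (w₀ - 1)
        = (u:ℂ) ^ (Complex.I * (s:ℂ)) * (((Real.sqrt (μ ^ k * u) / (μ ^ k * u) : ℝ)) : ℂ) := by
      have h1 : w₀ - 1 = Complex.I * (s:ℂ) + (-(1/2) : ℂ) := by rw [hw₀]; ring
      rw [h1, Complex.cpow_add _ _ (Complex.ofReal_ne_zero.2 hv0.ne')]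
      congr 1
      · rw [Complex.ofReal_mul, Complex.mul_cpow_ofReal_nonneg hμk0.le hu0.le,
          hμk_one hs n hn hL hμ k, one_mul]
      · have h2 : ((-(1/2) : ℝ) : ℂ) = (-(1/2) : ℂ) := by norm_num
        rw [← h2, ← Complex.ofReal_cpow hv0.le, rpow_neg_half_eq _ hv0]
    rw [hh, hψ]
    simp only
    rw [hsplit]
    have hpsum : (∑' (m : ℕ), f (((m : ℝ) + 1) * (μ ^ k * u))) = psum f (μ ^ k * u) := rfl
    rw [hpsum, Complex.real_smul]
    push_cast
    have husq : (0:ℝ) < Real.sqrt (μ ^ k * u) := Real.sqrt_pos.2 hv0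
    field_simp
    have hune : (u:ℂ) ≠ 0 := Complex.ofReal_ne_zero.2 hu0.ne'
    have hμne : (μ:ℂ) ^ k ≠ 0 := zpow_ne_zero _ (Complex.ofReal_ne_zero.2 hμ0.ne')
    rw [smul_eq_mul]
    field_simp
  -- Norm bounds
  set r : ℝ := q⁻¹ with hr
  have hr0 : 0 < r := inv_pos.2 hq0
  have hr1 : r < 1 := inv_lt_one_of_one_lt₀ hq1
  have hrpow : ∀ m : ℕ, r ^ m = (q ^ m)⁻¹ := fun m => by rw [hr, inv_pow]
  have hψnorm : ∀ v : ℝ, 0 < v → ‖ψ v‖ = v ^ (-(1/2) : ℝ) * |psum f v| := by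
    intro v hv0
    rw [hψ]
    simp only [norm_smul, Complex.norm_real, Real.norm_eq_abs,
      Complex.norm_cpow_eq_rpow_re_of_pos hv0, hw₀re']
  have hμk_rpow : ∀ k : ℤ, (μ ^ k : ℝ) ^ (-(1/2) : ℝ) = (q ^ k)⁻¹ := by
    intro k
    have hqk0 : (0:ℝ) < q ^ k := zpow_pos hq0 k
    rw [rpow_neg_half_eq _ (zpow_pos hμ0 k), hμqq k, Real.sqrt_mul_self hqk0.le]
    rw [div_eq_iff (by positivity)]
    field_simp
  have hbound : ∀ k : ℤ, ∀ u ∈ Set.Ioc (1:ℝ) μ, ‖h k u‖ ≤ (B + C) * r ^ k.natAbs := by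
    intro k u hu
    have hu1 : 1 ≤ u := hu.1.le
    have hu0 : 0 < u := lt_trans one_pos hu.1
    have hμk0 : (0:ℝ) < μ ^ k := zpow_pos hμ0 k
    have hqk0 : (0:ℝ) < q ^ k := zpow_pos hq0 k
    have hv0 : 0 < μ ^ k * u := mul_pos hμk0 hu0
    have hle : μ ^ k ≤ μ ^ k * u := le_mul_of_one_le_right hμk0.le hu1
    have hnorm : ‖h k u‖ = μ ^ k * ((μ ^ k * u) ^ (-(1/2) : ℝ) * |psum f (μ ^ k * u)|) := by
      rw [hh]
      simp only [norm_smul, Real.norm_eq_abs, abs_of_pos hμk0]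
      rw [hψnorm _ hv0]
    have hmono : (μ ^ k * u) ^ (-(1/2) : ℝ) ≤ (μ ^ k) ^ (-(1/2) : ℝ) :=
      Real.rpow_le_rpow_of_nonpos hμk0 hle (by norm_num)
    rcases le_or_gt 0 k with hk | hk
    · -- k ≥ 0
      have hv1 : (1:ℝ) ≤ μ ^ k * u := by
        have hμk1 : (1:ℝ) ≤ μ ^ k := one_le_zpow₀ hμ1.le hk
        nlinarith
      have hps : |psum f (μ ^ k * u)| ≤ C / μ ^ k := by
        refine (hC _ hv1).trans ?_
        rw [pow_one]
        exact div_le_div_of_nonneg_left hC0 hμk0 hle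
      have step : ‖h k u‖ ≤ μ ^ k * ((μ ^ k) ^ (-(1/2) : ℝ) * (C / μ ^ k)) := by
        rw [hnorm]
        refine mul_le_mul_of_nonneg_left ?_ hμk0.le
        exact mul_le_mul hmono hps (abs_nonneg _) (Real.rpow_nonneg hμk0.le _)
      refine step.trans ?_
      have heq : μ ^ k * ((μ ^ k) ^ (-(1/2) : ℝ) * (C / μ ^ k)) = C * r ^ k.natAbs := by
        rw [hμk_rpow k, hrpow, hμqq k]
        rw [show q ^ k.natAbs = q ^ k by
          rw [← zpow_natCast q k.natAbs, Int.natAbs_of_nonneg hk]]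
        field_simp
      rw [heq]
      exact mul_le_mul_of_nonneg_right (by linarith) (pow_nonneg hr0.le _)
    · -- k < 0
      have hps : |psum f (μ ^ k * u)| ≤ B := hB _ hv0
      have step : ‖h k u‖ ≤ μ ^ k * ((μ ^ k) ^ (-(1/2) : ℝ) * B) := by
        rw [hnorm]
        refine mul_le_mul_of_nonneg_left ?_ hμk0.le
        exact mul_le_mul hmono hps (abs_nonneg _) (Real.rpow_nonneg hμk0.le _)
      refine step.trans ?_
      have heq : μ ^ k * ((μ ^ k) ^ (-(1/2) : ℝ) * B) = B * r ^ k.natAbs := by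
        rw [hμk_rpow k, hrpow, hμqq k]
        have hkn : q ^ k.natAbs = (q ^ k)⁻¹ := by
          rw [← zpow_natCast q k.natAbs,
            show (k.natAbs : ℤ) = -k by omega, zpow_neg]
        rw [hkn]
        field_simp
      rw [heq]
      exact mul_le_mul_of_nonneg_right (by linarith) (pow_nonneg hr0.le _)
  have hsummable : Summable (fun k : ℤ => (B + C) * r ^ k.natAbs) := by
    refine Summable.mul_left _ ?_
    refine Summable.of_nat_of_neg ?_ ?_
    · refine (summable_geometric_of_lt_one hr0.le hr1).congr (fun m => ?_)
      simp
    · refine (summable_geometric_of_lt_one hr0.le hr1).congr (fun m => ?_)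
      simp
  -- Integrability of each h k on Ioc 1 μ
  have hint_k : ∀ k : ℤ, IntegrableOn (h k) (Set.Ioc (1:ℝ) μ) volume := by
    intro k
    have hμk0 : (0:ℝ) < μ ^ k := zpow_pos hμ0 k
    have hk1 : μ ^ k ≤ μ ^ (k + 1) := zpow_le_zpow_right₀ hμ1.le (by omega)
    have hsub : Set.Ioc (μ ^ k) (μ ^ (k+1)) ⊆ Ioi (0:ℝ) :=
      fun x hx => lt_trans (zpow_pos hμ0 k) hx.1
    have h1 : IntervalIntegrable ψ volume (μ ^ k) (μ ^ (k+1)) :=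
      (intervalIntegrable_iff_integrableOn_Ioc_of_le hk1).2 (hψint.mono_set hsub)
    have h2 := h1.comp_mul_left (c := μ ^ k)
    rw [div_self hμk0.ne'] at h2
    rw [show μ ^ (k+1) / μ ^ k = μ by
      rw [zpow_add_one₀ hμ0.ne', mul_div_cancel_left₀ _ hμk0.ne']] at h2
    have h3 := (intervalIntegrable_iff_integrableOn_Ioc_of_le hμ1.le).1 h2
    exact h3.smul (μ ^ k : ℝ)
  -- Step B : swap integral and sum
  have hsumnorm : Summable fun k : ℤ => ∫ u in Set.Ioc (1:ℝ) μ, ‖h k u‖ := by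
    refine Summable.of_nonneg_of_le
      (fun k => setIntegral_nonneg measurableSet_Ioc (fun u _ => norm_nonneg _))
      (fun k => ?_) (hsummable.mul_right (μ - 1))
    calc ∫ u in Set.Ioc (1:ℝ) μ, ‖h k u‖
        ≤ ∫ _u in Set.Ioc (1:ℝ) μ, (B + C) * r ^ k.natAbs := by
          refine setIntegral_mono_on ((hint_k k).norm) (integrableOn_const ?_)
            measurableSet_Ioc (fun u hu => hbound k u hu)
          exact measure_Ioc_lt_top.ne
      _ = (B + C) * r ^ k.natAbs * (μ - 1) := by
          rw [setIntegral_const, Real.volume_real_Ioc, max_eq_left (by linarith), smul_eq_mul]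
          ring
  have hswap : ∫ u in Set.Ioc (1:ℝ) μ, (∑' k : ℤ, h k u)
      = ∑' k : ℤ, ∫ u in Set.Ioc (1:ℝ) μ, h k u :=
    (integral_tsum_of_summable_integral_norm (fun k => hint_k k) hsumnorm).symm
  -- Step C : change of variables
  have hC2 : ∀ k : ℤ, (∫ u in Set.Ioc (1:ℝ) μ, h k u)
      = ∫ v in Set.Ioc (μ ^ k) (μ ^ (k+1)), ψ v := by
    intro k
    have hμk0 : (0:ℝ) < μ ^ k := zpow_pos hμ0 k
    have hk1 : μ ^ k ≤ μ ^ (k + 1) := zpow_le_zpow_right₀ hμ1.le (by omega)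
    rw [← intervalIntegral.integral_of_le hμ1.le, ← intervalIntegral.integral_of_le hk1]
    rw [hh]
    simp only
    rw [intervalIntegral.integral_smul,
      intervalIntegral.integral_comp_mul_left (fun v => ψ v) hμk0.ne']
    rw [mul_one, ← zpow_add_one₀ hμ0.ne', smul_smul, mul_inv_cancel₀ hμk0.ne', one_smul]
  -- Step D : sum the pieces to the full integral over (0, ∞)
  have hunion : (⋃ k : ℤ, Set.Ioc (μ ^ k) (μ ^ (k+1))) = Ioi (0:ℝ) := by
    ext x
    simp only [mem_iUnion, mem_Ioi]
    constructor
    · rintro ⟨k, hk⟩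
      exact lt_trans (zpow_pos hμ0 k) hk.1
    · intro hx
      exact exists_mem_Ioc_zpow hx hμ1
  have hdisj : Pairwise (Function.onFun Disjoint fun k : ℤ => Set.Ioc (μ ^ k) (μ ^ (k+1))) := by
    intro j k hjk
    rcases hjk.lt_or_gt with hlt | hlt
    · refine Set.Ioc_disjoint_Ioc.2 ?_
      refine le_trans (min_le_left _ _) (le_trans ?_ (le_max_right _ _))
      exact zpow_le_zpow_right₀ hμ1.le (by omega)
    · refine Set.Ioc_disjoint_Ioc.2 ?_
      refine le_trans (min_le_right _ _) (le_trans ?_ (le_max_left _ _))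
      exact zpow_le_zpow_right₀ hμ1.le (by omega)
  have hD : ∑' k : ℤ, (∫ v in Set.Ioc (μ ^ k) (μ ^ (k+1)), ψ v) = ∫ v in Ioi (0:ℝ), ψ v := by
    rw [← hunion]
    exact (integral_iUnion (fun k => measurableSet_Ioc) hdisj
      (hunion ▸ hψint : IntegrableOn ψ (⋃ k : ℤ, Set.Ioc (μ ^ k) (μ ^ (k+1))) volume)).symm
  calc (∫ u in Set.Ioc (1:ℝ) μ, (u:ℂ) ^ (Complex.I * (s:ℂ)) * (SigmaE μ f u : ℂ) / u)
      = ∫ u in Set.Ioc (1:ℝ) μ, (∑' k : ℤ, h k u) :=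
        setIntegral_congr_fun measurableSet_Ioc hA
    _ = ∑' k : ℤ, ∫ u in Set.Ioc (1:ℝ) μ, h k u := hswap
    _ = ∑' k : ℤ, ∫ v in Set.Ioc (μ ^ k) (μ ^ (k+1)), ψ v := tsum_congr hC2
    _ = ∫ v in Ioi (0:ℝ), ψ v := hD
    _ = mellinG f (1/2 + Complex.I * (s:ℂ)) := rfl

end unfold2
/-- The space `S₀^ev` of even real Schwartz functions with `f(0) = 0` and `∫ f = 0`. -/
def S0ev : Set (SchwartzMap ℝ ℝ) :=
  {f | (∀ x, f (-x) = f x) ∧ f 0 = 0 ∧ (∫ x : ℝ, f x) = 0}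

/-- The measure `d*u = du/u` on the fundamental domain `(1, μ]` of `ℝ₊*/μ^ℤ`;
`L²` of this measure is `L²(C)` for the circle `C = ℝ₊*/μ^ℤ` of length `log μ`. -/
noncomputable def mulHaarOn (μ : ℝ) : Measure ℝ :=
  (volume.restrict (Set.Ioc (1:ℝ) μ)).withDensity fun u => ENNReal.ofReal u⁻¹

/-- The circle `C = ℝ₊*/μ^ℤ` is a ζ-cycle when `Σ_μ E(S₀^ev)` is not dense in `L²(C)`,
equivalently when some nonzero `g ∈ L²(C)` is orthogonal to all `Σ_μ E(f)`, `f ∈ S₀^ev`. -/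
noncomputable def IsZetaCycle (μ : ℝ) : Prop :=
  ∃ g : Lp ℂ 2 (mulHaarOn μ), g ≠ 0 ∧
    ∀ f ∈ S0ev, (∫ u, (starRingEnd ℂ) (g u) * (SigmaE μ f u : ℂ) ∂(mulHaarOn μ)) = 0

-- auxiliary lemmas for the final assembly

lemma measurable_ofReal_cpow_const (c : ℂ) : Measurable fun u : ℝ => (u:ℂ) ^ c := by
  have heq : (fun u : ℝ => (u:ℂ) ^ c) = fun u : ℝ =>
      if (u:ℂ) = 0 then (if c = 0 then 1 else 0) else Complex.exp (Complex.log (u:ℂ) * c) := by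
    funext u
    rw [Complex.cpow_def]
  rw [heq]
  have hset : MeasurableSet {u : ℝ | (u:ℂ) = 0} := by
    have : {u : ℝ | (u:ℂ) = 0} = {0} := by
      ext u; simp [Complex.ofReal_eq_zero]
    rw [this]
    exact measurableSet_singleton 0
  refine Measurable.ite hset measurable_const ?_
  exact Complex.measurable_exp.comp
    ((Complex.measurable_log.comp Complex.measurable_ofReal).mul_const c)

lemma isFiniteMeasure_mulHaarOn (μr : ℝ) : IsFiniteMeasure (mulHaarOn μr) := by
  refine ⟨?_⟩
  rw [mulHaarOn, withDensity_apply _ MeasurableSet.univ, Measure.restrict_univ]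
  have hb : ∀ᵐ u ∂(volume.restrict (Set.Ioc (1:ℝ) μr)), ENNReal.ofReal u⁻¹ ≤ 1 := by
    refine (ae_restrict_iff' measurableSet_Ioc).2 (ae_of_all _ fun u hu => ?_)
    have h1 : u⁻¹ ≤ 1 := inv_le_one_of_one_le₀ hu.1.le
    calc ENNReal.ofReal u⁻¹ ≤ ENNReal.ofReal 1 := ENNReal.ofReal_le_ofReal h1
      _ = 1 := ENNReal.ofReal_one
  calc ∫⁻ u, ENNReal.ofReal u⁻¹ ∂(volume.restrict (Set.Ioc (1:ℝ) μr))
      ≤ ∫⁻ _u, 1 ∂(volume.restrict (Set.Ioc (1:ℝ) μr)) := lintegral_mono_ae hb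
    _ = volume (Set.Ioc (1:ℝ) μr) := by simp
    _ < ⊤ := measure_Ioc_lt_top

/-- if `ζ(1/2+is) = 0` with `s > 0` and `L = 2πn/s`, `μ = e^L`, then
`u ↦ u^{is}` is well defined on `C = ℝ₊*/μ^ℤ` (i.e. `μ^{is} = 1`), it is orthogonal to every
`Σ_μ E(f)` for `f ∈ S₀^ev`, and in particular `C` is a ζ-cycle. -/
theorem stmt7 (s : ℝ) (hs : 0 < s) (hzero : riemannZeta (1 / 2 + Complex.I * s) = 0)
    (n : ℕ) (hn : 0 < n) (L μ : ℝ) (hL : L = 2 * Real.pi * n / s) (hμ : μ = Real.exp L) :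
    ((μ : ℂ) ^ (Complex.I * (s : ℂ)) = 1) ∧
    (∀ f ∈ S0ev,
      (∫ u in Set.Ioc (1:ℝ) μ,
        (u : ℂ) ^ (Complex.I * (s : ℂ)) * (SigmaE μ f u : ℂ) / (u : ℂ)) = 0) ∧
    IsZetaCycle μ := by
  have hμ1 : 1 < μ := hμ_one hs n hn hL hμ
  have hμ0 : 0 < μ := lt_trans one_pos hμ1
  have hw₀re : (1/2 + Complex.I * (s:ℂ)).re = 1/2 := by
    simp [Complex.add_re, Complex.mul_re]
  have hw₀ne : (1/2 + Complex.I * (s:ℂ)) ≠ 1 := by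
    intro hcon
    have him : (1/2 + Complex.I * (s:ℂ)).im = s := by
      simp [Complex.add_im, Complex.mul_im]
    rw [hcon] at him
    simp at him
    exact hs.ne him
  -- Part 1
  have hpart1 : ((μ : ℂ) ^ (Complex.I * (s : ℂ)) = 1) := by
    have h := hμk_one hs n hn hL hμ 1
    rwa [zpow_one] at h
  -- Part 2
  have hpart2 : ∀ f ∈ S0ev,
      (∫ u in Set.Ioc (1:ℝ) μ,
        (u : ℂ) ^ (Complex.I * (s : ℂ)) * (SigmaE μ f u : ℂ) / (u : ℂ)) = 0 := by
    intro f hf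
    obtain ⟨hev, hf0, hint⟩ := hf
    rw [unfold_integral hs n hn hL hμ f hev hf0 hint]
    rw [mellinG_eq_mul f hev hf0 hint hw₀re hw₀ne]
    rw [hzero, zero_mul]
  refine ⟨hpart1, hpart2, ?_⟩
  -- Part 3
  haveI : IsFiniteMeasure (mulHaarOn μ) := isFiniteMeasure_mulHaarOn μ
  set g0 : ℝ → ℂ := fun u => (u:ℂ) ^ (-(Complex.I * (s:ℂ))) with hg0
  have hg0meas : Measurable g0 := measurable_ofReal_cpow_const _
  have hae : ∀ᵐ u ∂(mulHaarOn μ), u ∈ Set.Ioc (1:ℝ) μ := by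
    have h1 : ∀ᵐ u ∂(volume.restrict (Set.Ioc (1:ℝ) μ)), u ∈ Set.Ioc (1:ℝ) μ :=
      ae_restrict_mem measurableSet_Ioc
    exact h1.filter_mono (withDensity_absolutelyContinuous _ _).ae_le
  have hg0norm : ∀ u : ℝ, 0 < u → ‖g0 u‖ = 1 := by
    intro u hu0
    rw [hg0]
    simp only
    rw [Complex.norm_cpow_eq_rpow_re_of_pos hu0]
    simp
  have hmem : MemLp g0 2 (mulHaarOn μ) := by
    refine MemLp.of_bound hg0meas.aestronglyMeasurable 1 ?_
    filter_upwards [hae] with u hu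
    rw [hg0norm u (lt_trans one_pos hu.1)]
  refine ⟨hmem.toLp g0, ?_, ?_⟩
  · -- nonzero
    intro hzero'
    have h0 : g0 =ᵐ[mulHaarOn μ] 0 := by
      have h1 := hmem.coeFn_toLp
      rw [hzero'] at h1
      exact (h1.symm.trans (Lp.coeFn_zero ℂ 2 (mulHaarOn μ)))
    have hnull : mulHaarOn μ {u : ℝ | g0 u ≠ 0} = 0 := by
      rw [← ae_iff]
      filter_upwards [h0] with u hu
      simpa using hu
    have hsub : Set.Ioc (1:ℝ) μ ⊆ {u : ℝ | g0 u ≠ 0} := by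
      intro u hu
      have hu0 : (0:ℝ) < u := lt_trans one_pos hu.1
      have := hg0norm u hu0
      intro hcon
      rw [hcon] at this
      simp at this
    have hIoc0 : mulHaarOn μ (Set.Ioc (1:ℝ) μ) = 0 := measure_mono_null hsub hnull
    have hlow : ENNReal.ofReal μ⁻¹ * volume (Set.Ioc (1:ℝ) μ)
        ≤ mulHaarOn μ (Set.Ioc (1:ℝ) μ) := by
      rw [mulHaarOn, withDensity_apply _ measurableSet_Ioc,
        Measure.restrict_restrict measurableSet_Ioc, Set.inter_self]
      rw [← setLIntegral_const]
      refine setLIntegral_mono (ENNReal.measurable_ofReal.comp measurable_inv) ?_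
      intro u hu
      exact ENNReal.ofReal_le_ofReal
        (inv_anti₀ (lt_trans one_pos hu.1) hu.2)
    rw [hIoc0] at hlow
    rw [Real.volume_Ioc] at hlow
    have hpos : (0:ENNReal) < ENNReal.ofReal μ⁻¹ * ENNReal.ofReal (μ - 1) := by
      apply ENNReal.mul_pos
      · exact (ENNReal.ofReal_pos.2 (inv_pos.2 hμ0)).ne'
      · exact (ENNReal.ofReal_pos.2 (by linarith)).ne'
    exact absurd (le_antisymm hlow (by positivity)) hpos.ne'
  · -- orthogonality
    intro f hf
    obtain ⟨hev, hf0, hint⟩ := hf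
    have hstep1 : (∫ u, (starRingEnd ℂ) ((hmem.toLp g0) u) * (SigmaE μ f u : ℂ) ∂(mulHaarOn μ))
        = ∫ u, (starRingEnd ℂ) (g0 u) * (SigmaE μ f u : ℂ) ∂(mulHaarOn μ) := by
      refine integral_congr_ae ?_
      filter_upwards [hmem.coeFn_toLp] with u hu
      rw [hu]
    rw [hstep1]
    have hconj : ∀ u : ℝ, 0 < u →
        (starRingEnd ℂ) (g0 u) = (u:ℂ) ^ (Complex.I * (s:ℂ)) := by
      intro u hu0
      have hne : ((u:ℝ):ℂ) ≠ 0 := Complex.ofReal_ne_zero.2 hu0.ne'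
      rw [hg0]
      simp only
      rw [Complex.cpow_def_of_ne_zero hne, Complex.cpow_def_of_ne_zero hne]
      rw [← Complex.exp_conj]
      congr 1
      rw [← Complex.ofReal_log hu0.le]
      simp only [map_mul, map_neg, Complex.conj_ofReal, Complex.conj_I]
      ring
    have hdens : (fun u : ℝ => ENNReal.ofReal u⁻¹)
        = fun u : ℝ => ((Real.toNNReal u⁻¹ : ℝ≥0) : ℝ≥0∞) := rfl
    rw [mulHaarOn, hdens,
      integral_withDensity_eq_integral_smul (measurable_inv.real_toNNReal) _]
    have hfinal : ∀ u ∈ Set.Ioc (1:ℝ) μ,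
        (Real.toNNReal u⁻¹ : ℝ≥0) • ((starRingEnd ℂ) (g0 u) * (SigmaE μ f u : ℂ))
          = (u : ℂ) ^ (Complex.I * (s : ℂ)) * (SigmaE μ f u : ℂ) / (u : ℂ) := by
      intro u hu
      have hu0 : (0:ℝ) < u := lt_trans one_pos hu.1
      rw [hconj u hu0, NNReal.smul_def, Real.coe_toNNReal _ (inv_nonneg.2 hu0.le),
        Complex.real_smul, Complex.ofReal_inv, div_eq_mul_inv]
      ring
    rw [setIntegral_congr_fun measurableSet_Ioc hfinal]
    exact hpart2 f ⟨hev, hf0, hint⟩
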